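/- arXiv:1602.09118 — 7 statements merged into one kernel-verified Lean document; each statement's English description precedes it below -/
import Mathlib

section
/- In the finite MDP setup, for any function f : S → ℝ and any policy π, J(π) = Σ_s μ(s) f(s) + (1/(1−γ)) Σ_s d^π(s) Σ_a π(a|s) Σ_{s'} P(s'|s,a) (R(s,a,s') + γf(s') − f(s)). -/
open Finset Matrix

noncomputable section

/-- The state-transition matrix of policy `π`: `(Pmat P π) s' s = Σ_a P(s'|s,a) π(a|s)`. -/
def Pmat {S A : Type*} [Fintype A] (P : S → A → S → ℝ) (π : S → A → ℝ) : Matrix S S ℝ :=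
  Matrix.of fun s' s => ∑ a, P s a s' * π s a

/-- The discounted future state distribution `d^π = (1-γ)(I - γ P_π)⁻¹ μ`. -/
def dpi {S A : Type*} [Fintype S] [Fintype A] [DecidableEq S]
    (γ : ℝ) (P : S → A → S → ℝ) (μ : S → ℝ) (π : S → A → ℝ) : S → ℝ :=
  (1 - γ) • ((1 - γ • Pmat P π)⁻¹).mulVec μ

/-- The expected discounted return `J(π)`. -/
def J {S A : Type*} [Fintype S] [Fintype A] [DecidableEq S]
    (γ : ℝ) (P : S → A → S → ℝ) (R : S → A → S → ℝ) (μ : S → ℝ) (π : S → A → ℝ) : ℝ :=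
  (1 / (1 - γ)) * ∑ s, dpi γ P μ π s * ∑ a, π s a * ∑ s', P s a s' * R s a s'

lemma det_ne_zero_aux {S A : Type*} [Fintype S] [Fintype A] [Nonempty S] [DecidableEq S]
    (γ : ℝ) (hγ0 : 0 ≤ γ) (hγ1 : γ < 1)
    (P : S → A → S → ℝ) (hP0 : ∀ s a s', 0 ≤ P s a s') (hP1 : ∀ s a, ∑ s', P s a s' = 1)
    (π : S → A → ℝ) (hπ0 : ∀ s a, 0 ≤ π s a) (hπ1 : ∀ s, ∑ a, π s a = 1) :
    (1 - γ • Pmat P π).det ≠ 0 := by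
  set M := Pmat P π with hM
  have hMnn : ∀ s' s, 0 ≤ M s' s := fun s' s =>
    Finset.sum_nonneg fun a _ => mul_nonneg (hP0 s a s') (hπ0 s a)
  have hcol : ∀ s, ∑ s', M s' s = 1 := by
    intro s
    simp only [hM, Pmat, Matrix.of_apply]
    rw [Finset.sum_comm]
    calc (∑ a, ∑ s', P s a s' * π s a) = ∑ a, (∑ s', P s a s') * π s a := by
          simp [Finset.sum_mul]
      _ = 1 := by simp [hP1, hπ1]
  intro hdet
  have hdetT : (1 - γ • M)ᵀ.det = 0 := by rw [Matrix.det_transpose]; exact hdet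
  obtain ⟨v, hv, hv0⟩ := (Matrix.exists_mulVec_eq_zero_iff).2 hdetT
  have hvs : ∀ s, v s = γ * ∑ s', M s' s * v s' := by
    intro s
    have := congrFun hv0 s
    simp only [Matrix.mulVec, dotProduct, Matrix.transpose_apply,
      Matrix.sub_apply, Matrix.one_apply, Matrix.smul_apply, smul_eq_mul,
      Pi.zero_apply, sub_mul, Finset.sum_sub_distrib] at this
    have h1 : ∑ s', (if s' = s then (1:ℝ) else 0) * v s' = v s := by simp
    rw [h1] at this
    have := sub_eq_zero.mp this
    rw [this]
    rw [Finset.mul_sum]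
    congr 1; ext s'; ring
  obtain ⟨s0, _, hs0⟩ := Finset.exists_max_image Finset.univ (fun s => |v s|)
    ⟨Classical.arbitrary S, Finset.mem_univ _⟩
  have hbound : |v s0| ≤ γ * |v s0| := by
    calc |v s0| = γ * |∑ s', M s' s0 * v s'| := by rw [hvs s0, abs_mul, abs_of_nonneg hγ0]
      _ ≤ γ * ∑ s', M s' s0 * |v s'| := by
          apply mul_le_mul_of_nonneg_left _ hγ0
          refine le_trans (Finset.abs_sum_le_sum_abs _ _) ?_
          apply Finset.sum_le_sum
          intro s' _
          rw [abs_mul, abs_of_nonneg (hMnn s' s0)]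
      _ ≤ γ * ∑ s', M s' s0 * |v s0| := by
          apply mul_le_mul_of_nonneg_left _ hγ0
          apply Finset.sum_le_sum
          intro s' _
          exact mul_le_mul_of_nonneg_left (hs0 s' (Finset.mem_univ _)) (hMnn s' s0)
      _ = γ * |v s0| := by rw [← Finset.sum_mul, hcol, one_mul]
  have hvz : |v s0| ≤ 0 := by nlinarith [abs_nonneg (v s0)]
  apply hv
  ext s
  have := hs0 s (Finset.mem_univ _)
  have : |v s| ≤ 0 := le_trans this hvz
  have := abs_nonneg (v s)
  simp only [Pi.zero_apply]
  exact abs_eq_zero.mp (le_antisymm ‹|v s| ≤ 0› ‹0 ≤ |v s|›)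

theorem stmt_3 {S A : Type*} [Fintype S] [Fintype A] [Nonempty S] [Nonempty A] [DecidableEq S]
    (γ : ℝ) (hγ0 : 0 ≤ γ) (hγ1 : γ < 1)
    (P : S → A → S → ℝ) (hP0 : ∀ s a s', 0 ≤ P s a s') (hP1 : ∀ s a, ∑ s', P s a s' = 1)
    (R : S → A → S → ℝ)
    (μ : S → ℝ) (hμ0 : ∀ s, 0 ≤ μ s) (hμ1 : ∑ s, μ s = 1)
    (π : S → A → ℝ) (hπ0 : ∀ s a, 0 ≤ π s a) (hπ1 : ∀ s, ∑ a, π s a = 1)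
    (f : S → ℝ) :
    J γ P R μ π
      = (∑ s, μ s * f s)
        + (1 / (1 - γ)) * ∑ s, dpi γ P μ π s *
            ∑ a, π s a * ∑ s', P s a s' * (R s a s' + γ * f s' - f s) := by
  set M := Pmat P π with hM
  set d := dpi γ P μ π with hd
  have hdet := det_ne_zero_aux γ hγ0 hγ1 P hP0 hP1 π hπ0 hπ1
  -- (1 - γ•M) *ᵥ d = (1-γ) • μ
  have hAd : (1 - γ • M) *ᵥ d = (1 - γ) • μ := by
    rw [hd]
    show (1 - γ • M) *ᵥ ((1 - γ) • ((1 - γ • M)⁻¹ *ᵥ μ)) = (1 - γ) • μ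
    rw [Matrix.mulVec_smul, Matrix.mulVec_mulVec,
      Matrix.mul_nonsing_inv _ (isUnit_iff_ne_zero.mpr hdet), Matrix.one_mulVec]
  have hAv : ∀ s, ((1 - γ • M) *ᵥ d) s = d s - γ * ∑ s', M s s' * d s' := by
    intro s
    simp only [Matrix.mulVec, dotProduct, Matrix.sub_apply, Matrix.one_apply,
      Matrix.smul_apply, smul_eq_mul, sub_mul, Finset.sum_sub_distrib]
    have h2 : ∑ s', (if s = s' then (1:ℝ) else 0) * d s' = d s := by simp
    rw [h2, Finset.mul_sum]
    congr 1
    exact Finset.sum_congr rfl fun s' _ => by ring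
  -- key telescoping identity
  have key : ∑ s, d s * (γ * (∑ s', M s' s * f s') - f s)
      = -((1 - γ) * ∑ s, μ s * f s) := by
    have h1 : ∑ s, d s * (γ * (∑ s', M s' s * f s'))
        = ∑ s', f s' * (γ * ∑ s, M s' s * d s) := by
      simp only [Finset.mul_sum]
      rw [Finset.sum_comm]
      exact Finset.sum_congr rfl fun s' _ => Finset.sum_congr rfl fun s _ => by ring
    have hsum : ∑ s, f s * ((1 - γ • M) *ᵥ d) s
        = ∑ s, f s * (d s - γ * ∑ s', M s s' * d s') :=
      Finset.sum_congr rfl fun s _ => by rw [hAv s]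
    calc ∑ s, d s * (γ * (∑ s', M s' s * f s') - f s)
        = (∑ s, d s * (γ * (∑ s', M s' s * f s'))) - ∑ s, d s * f s := by
          rw [← Finset.sum_sub_distrib]
          exact Finset.sum_congr rfl fun s _ => by ring
      _ = (∑ s', f s' * (γ * ∑ s, M s' s * d s)) - ∑ s, f s * d s := by
          rw [h1]
          congr 1
          exact Finset.sum_congr rfl fun s _ => mul_comm _ _
      _ = -∑ s, f s * ((1 - γ • M) *ᵥ d) s := by
          rw [hsum, ← Finset.sum_sub_distrib, ← Finset.sum_neg_distrib]
          exact Finset.sum_congr rfl fun s _ => by ring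
      _ = -((1 - γ) * ∑ s, μ s * f s) := by
          rw [hAd, neg_inj, Finset.mul_sum]
          exact Finset.sum_congr rfl fun s _ => by
            simp only [Pi.smul_apply, smul_eq_mul]; ring
  -- rewrite the inner sums
  have inner : ∀ s, ∑ a, π s a * ∑ s', P s a s' * (R s a s' + γ * f s' - f s)
      = (∑ a, π s a * ∑ s', P s a s' * R s a s')
        + (γ * (∑ s', M s' s * f s') - f s) := by
    intro s
    have h1 : ∀ a, ∑ s', P s a s' * (R s a s' + γ * f s' - f s)
        = (∑ s', P s a s' * R s a s') + γ * (∑ s', P s a s' * f s') - f s := by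
      intro a
      have : ∀ s', P s a s' * (R s a s' + γ * f s' - f s)
          = P s a s' * R s a s' + γ * (P s a s' * f s') - P s a s' * f s := by
        intro s'; ring
      rw [Finset.sum_congr rfl fun s' _ => this s']
      rw [Finset.sum_sub_distrib, Finset.sum_add_distrib, ← Finset.mul_sum,
        ← Finset.sum_mul, hP1, one_mul]
    rw [Finset.sum_congr rfl fun a _ => by rw [h1 a]]
    have : ∀ a, π s a * ((∑ s', P s a s' * R s a s') + γ * (∑ s', P s a s' * f s') - f s)
        = π s a * (∑ s', P s a s' * R s a s')
          + γ * (π s a * ∑ s', P s a s' * f s') - π s a * f s := by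
      intro a; ring
    rw [Finset.sum_congr rfl fun a _ => this a]
    rw [Finset.sum_sub_distrib, Finset.sum_add_distrib, ← Finset.mul_sum,
      ← Finset.sum_mul, hπ1, one_mul]
    have hswap : ∑ a, π s a * ∑ s', P s a s' * f s' = ∑ s', M s' s * f s' := by
      simp only [Finset.mul_sum]
      rw [Finset.sum_comm]
      refine Finset.sum_congr rfl fun s' _ => ?_
      simp only [hM, Pmat, Matrix.of_apply, Finset.sum_mul]
      exact Finset.sum_congr rfl fun a _ => by ring
    rw [hswap]
    ring
  -- put it together
  have hγne : (1 : ℝ) - γ ≠ 0 := by linarith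
  have hR : ∑ s, d s * ∑ a, π s a * ∑ s', P s a s' * (R s a s' + γ * f s' - f s)
      = ∑ s, d s * ((∑ a, π s a * ∑ s', P s a s' * R s a s')
          + (γ * (∑ s', M s' s * f s') - f s)) :=
    Finset.sum_congr rfl fun s _ => by rw [inner s]
  have expand : ∑ s, d s * ((∑ a, π s a * ∑ s', P s a s' * R s a s')
      + (γ * (∑ s', M s' s * f s') - f s))
      = (∑ s, d s * ∑ a, π s a * ∑ s', P s a s' * R s a s')
        + ∑ s, d s * (γ * (∑ s', M s' s * f s') - f s) := by
    rw [← Finset.sum_add_distrib]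
    exact Finset.sum_congr rfl fun s _ => by ring
  rw [hR, expand, key]
  unfold _root_.J
  rw [← hd]
  field_simp
  ring
end
end

section
/- In the finite MDP setup, for any two policies π and π', the difference of discounted future state distributions satisfies d^{π'} − d^π = γ (I − γP_{π'})^{−1} (P_{π'} − P_π) d^π. -/
open Finset Matrix

attribute [local instance] Matrix.linftyOpNormedRing Matrix.linftyOpNormedAlgebra

noncomputable section

lemma isUnit_one_sub_smul_Pmat {S A : Type*} [Fintype S] [Fintype A] [DecidableEq S]
    (γ : ℝ) (hγ0 : 0 ≤ γ) (hγ1 : γ < 1)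
    (P : S → A → S → ℝ) (hP0 : ∀ s a s', 0 ≤ P s a s') (hP1 : ∀ s a, ∑ s', P s a s' = 1)
    (π : S → A → ℝ) (hπ0 : ∀ s a, 0 ≤ π s a) (hπ1 : ∀ s, ∑ a, π s a = 1) :
    IsUnit (1 - γ • Pmat P π) := by
  have hB0 : ∀ s' s, 0 ≤ Pmat P π s' s := fun s' s =>
    Finset.sum_nonneg fun a _ => mul_nonneg (hP0 s a s') (hπ0 s a)
  have hcol : ∀ s, ∑ s', Pmat P π s' s = 1 := by
    intro s
    simp only [Pmat, Matrix.of_apply]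
    rw [Finset.sum_comm]
    calc ∑ a, ∑ s', P s a s' * π s a = ∑ a, (∑ s', P s a s') * π s a := by
          simp [Finset.sum_mul]
      _ = 1 := by simp [hP1, hπ1]
  have hnorm : ‖(γ • Pmat P π)ᵀ‖ < 1 := by
    rw [linfty_opNorm_def]
    rw [show (1:ℝ) = ((1:NNReal):ℝ) by simp]
    rw [NNReal.coe_lt_coe]
    apply Finset.sup_lt_iff (by norm_num) |>.2
    intro i _
    have : ((∑ j, ‖(γ • Pmat P π)ᵀ i j‖₊ : NNReal) : ℝ) < ((1:NNReal):ℝ) := by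
      push_cast
      calc ∑ j, ‖(γ • Pmat P π)ᵀ i j‖ = ∑ j, γ * Pmat P π j i := by
            apply Finset.sum_congr rfl
            intro j _
            rw [Matrix.transpose_apply, Matrix.smul_apply, Real.norm_eq_abs, smul_eq_mul,
              abs_of_nonneg (mul_nonneg hγ0 (hB0 j i))]
        _ = γ := by rw [← Finset.mul_sum, hcol]; ring
        _ < 1 := hγ1
    exact_mod_cast this
  have hT : IsUnit (1 - (γ • Pmat P π)ᵀ) := (Units.oneSub _ hnorm).isUnit
  rw [Matrix.isUnit_iff_isUnit_det] at hT ⊢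
  rwa [show (1 - (γ • Pmat P π)ᵀ) = (1 - γ • Pmat P π)ᵀ by simp, Matrix.det_transpose] at hT

theorem stmt_6 {S A : Type*} [Fintype S] [Fintype A] [Nonempty S] [Nonempty A] [DecidableEq S]
    (γ : ℝ) (hγ0 : 0 ≤ γ) (hγ1 : γ < 1)
    (P : S → A → S → ℝ) (hP0 : ∀ s a s', 0 ≤ P s a s') (hP1 : ∀ s a, ∑ s', P s a s' = 1)
    (μ : S → ℝ) (hμ0 : ∀ s, 0 ≤ μ s) (hμ1 : ∑ s, μ s = 1)
    (π π' : S → A → ℝ)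
    (hπ0 : ∀ s a, 0 ≤ π s a) (hπ1 : ∀ s, ∑ a, π s a = 1)
    (hπ'0 : ∀ s a, 0 ≤ π' s a) (hπ'1 : ∀ s, ∑ a, π' s a = 1) :
    dpi γ P μ π' - dpi γ P μ π
      = γ • ((1 - γ • Pmat P π')⁻¹).mulVec ((Pmat P π' - Pmat P π).mulVec (dpi γ P μ π)) := by
  set B := Pmat P π with hB
  set B' := Pmat P π' with hB'
  set M := 1 - γ • B with hM
  set M' := 1 - γ • B' with hM'
  have hU : IsUnit M := isUnit_one_sub_smul_Pmat γ hγ0 hγ1 P hP0 hP1 π hπ0 hπ1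
  have hU' : IsUnit M' := isUnit_one_sub_smul_Pmat γ hγ0 hγ1 P hP0 hP1 π' hπ'0 hπ'1
  have hdet : IsUnit M.det := (Matrix.isUnit_iff_isUnit_det M).1 hU
  have hdet' : IsUnit M'.det := (Matrix.isUnit_iff_isUnit_det M').1 hU'
  have key : M'⁻¹ - M⁻¹ = γ • (M'⁻¹ * (B' - B) * M⁻¹) := by
    have h1 : M'⁻¹ * (M - M') * M⁻¹ = M'⁻¹ - M⁻¹ := by
      rw [mul_sub, sub_mul, mul_assoc, Matrix.mul_nonsing_inv _ hdet, mul_one,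
        Matrix.nonsing_inv_mul _ hdet', one_mul]
    have h2 : M - M' = γ • (B' - B) := by
      rw [hM, hM', smul_sub]; abel
    rw [← h1, h2, Matrix.mul_smul, Matrix.smul_mul]
  simp only [dpi, ← hB, ← hB', ← hM, ← hM']
  rw [← smul_sub, ← Matrix.sub_mulVec, key]
  rw [Matrix.mulVec_smul, Matrix.mulVec_smul, smul_comm]
  congr 1
  rw [Matrix.smul_mulVec, ← Matrix.mulVec_mulVec, ← Matrix.mulVec_mulVec]
end
end

section
/- In the finite MDP setup, for any two policies π and π' and with Δ = P_{π'} − P_π, the vector Δd^π satisfies the ℓ1 bound Σ_{s'} |Σ_s Δ(s'|s) d^π(s)| ≤ 2 Σ_s d^π(s) D_TV(π'||π)[s]. -/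
open Finset Matrix

noncomputable section

/-- The per-state total variational divergence `D_TV(π'||π)[s] = (1/2) Σ_a |π'(a|s) - π(a|s)|`. -/
def DTV {S A : Type*} [Fintype A] (π' π : S → A → ℝ) (s : S) : ℝ :=
  (1 / 2) * ∑ a, |π' s a - π s a|

section Aux

attribute [local instance] Matrix.linftyOpNormedRing Matrix.linftyOpNormedAlgebra
  Matrix.linftyOpNormedSpace Matrix.linftyOpNormedAddCommGroup

/-- Neumann-series nonnegativity: for a row-stochastic nonnegative matrix `M` and `0 ≤ γ < 1`,
the inverse `(1 - γM)⁻¹ = Σ (γM)ⁿ` has nonnegative entries. -/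
lemma inv_one_sub_smul_nonneg {S : Type*} [Fintype S] [DecidableEq S] [Nonempty S]
    (γ : ℝ) (hγ0 : 0 ≤ γ) (hγ1 : γ < 1) (M : Matrix S S ℝ)
    (hM0 : ∀ i j, 0 ≤ M i j) (hM1 : ∀ i, ∑ j, M i j = 1) :
    ∀ i j, 0 ≤ (1 - γ • M)⁻¹ i j := by
  haveI : CompleteSpace (Matrix S S ℝ) := FiniteDimensional.complete ℝ _
  set t : Matrix S S ℝ := γ • M with ht
  have hnorm : ‖t‖ < 1 := by
    rw [Matrix.linfty_opNorm_def]
    have : ((Finset.univ : Finset S).sup fun i : S => ∑ j : S, ‖t i j‖₊ : NNReal)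
        ≤ ⟨γ, hγ0⟩ := by
      apply Finset.sup_le
      intro i _
      refine NNReal.coe_le_coe.mp ?_
      push_cast
      have : ∀ j : S, ‖t i j‖ = γ * M i j := by
        intro j
        simp only [ht, Matrix.smul_apply, smul_eq_mul, abs_of_nonneg (mul_nonneg hγ0 (hM0 i j)),
          Real.norm_eq_abs]
      rw [Finset.sum_congr rfl fun j _ => this j, ← Finset.mul_sum, hM1 i, mul_one]
      exact le_rfl
    calc ((Finset.univ.sup fun i : S => ∑ j : S, ‖t i j‖₊ : NNReal) : ℝ) ≤ γ := this
      _ < 1 := hγ1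
  have hpow : ∀ (n : ℕ) (i j : S), 0 ≤ (t ^ n) i j := by
    intro n
    induction n with
    | zero => intro i j; simp [Matrix.one_apply]; positivity
    | succ n ih =>
      intro i j
      rw [pow_succ, Matrix.mul_apply]
      exact Finset.sum_nonneg fun k _ => mul_nonneg (ih i k)
        (smul_nonneg hγ0 (hM0 k j))
  have hsummable : Summable fun n : ℕ => t ^ n :=
    summable_geometric_of_norm_lt_one hnorm
  have hinv : (1 - t)⁻¹ = ∑' n : ℕ, t ^ n := by
    rw [Matrix.nonsing_inv_eq_ringInverse]
    exact NormedRing.inverse_one_sub t hnorm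
  intro i j
  let e : Matrix S S ℝ →ₗ[ℝ] ℝ :=
    { toFun := fun A => A i j
      map_add' := fun A B => rfl
      map_smul' := fun c A => rfl }
  let eC : Matrix S S ℝ →L[ℝ] ℝ := LinearMap.toContinuousLinearMap e
  have h1 : eC (∑' n : ℕ, t ^ n) = ∑' n : ℕ, (t ^ n) i j := by
    rw [ContinuousLinearMap.map_tsum eC hsummable]
    rfl
  have : (1 - t)⁻¹ i j = ∑' n : ℕ, (t ^ n) i j := by
    rw [hinv]; exact h1
  rw [this]
  exact tsum_nonneg fun n => hpow n i j

end Aux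

theorem stmt_8 {S A : Type*} [Fintype S] [Fintype A] [Nonempty S] [Nonempty A] [DecidableEq S]
    (γ : ℝ) (hγ0 : 0 ≤ γ) (hγ1 : γ < 1)
    (P : S → A → S → ℝ) (hP0 : ∀ s a s', 0 ≤ P s a s') (hP1 : ∀ s a, ∑ s', P s a s' = 1)
    (μ : S → ℝ) (hμ0 : ∀ s, 0 ≤ μ s) (hμ1 : ∑ s, μ s = 1)
    (π π' : S → A → ℝ)
    (hπ0 : ∀ s a, 0 ≤ π s a) (hπ1 : ∀ s, ∑ a, π s a = 1)
    (hπ'0 : ∀ s a, 0 ≤ π' s a) (hπ'1 : ∀ s, ∑ a, π' s a = 1) :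
    ∑ s' : S, |∑ s : S, (Pmat P π' - Pmat P π) s' s * dpi γ P μ π s|
      ≤ 2 * ∑ s, dpi γ P μ π s * DTV π' π s := by
  set M : Matrix S S ℝ := Pmat P π with hM
  set d : S → ℝ := dpi γ P μ π with hd
  -- the transpose of M is row-stochastic with nonnegative entries
  have hN0 : ∀ i j, 0 ≤ Mᵀ i j := fun i j =>
    Finset.sum_nonneg fun a _ => mul_nonneg (hP0 i a j) (hπ0 i a)
  have hN1 : ∀ i, ∑ j, Mᵀ i j = 1 := by
    intro i
    have : ∑ j : S, Mᵀ i j = ∑ a, ∑ j : S, P i a j * π i a := by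
      simp only [Matrix.transpose_apply, hM, Pmat, Matrix.of_apply]
      rw [Finset.sum_comm]
    rw [this]
    simp [← Finset.sum_mul, hP1, hπ1]
  have hinvT : ∀ i j, 0 ≤ (1 - γ • Mᵀ)⁻¹ i j :=
    inv_one_sub_smul_nonneg γ hγ0 hγ1 Mᵀ hN0 hN1
  -- transfer to (1 - γ • M)⁻¹
  have hinv : ∀ i j, 0 ≤ (1 - γ • M)⁻¹ i j := by
    intro i j
    have hT : (1 - γ • M)ᵀ = 1 - γ • Mᵀ := by
      rw [Matrix.transpose_sub, Matrix.transpose_one, Matrix.transpose_smul]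
    have : (1 - γ • M)⁻¹ i j = (1 - γ • Mᵀ)⁻¹ j i := by
      rw [← hT, ← Matrix.transpose_nonsing_inv, Matrix.transpose_apply]
    rw [this]
    exact hinvT j i
  -- dpi is nonnegative
  have hd0 : ∀ s, 0 ≤ d s := by
    intro s
    simp only [hd, dpi, Pi.smul_apply, smul_eq_mul, Matrix.mulVec, dotProduct]
    exact mul_nonneg (by linarith) (Finset.sum_nonneg fun j _ =>
      mul_nonneg (hinv s j) (hμ0 j))
  -- entry formula for the difference matrix
  have hΔ : ∀ s' s : S, (Pmat P π' - Pmat P π) s' s = ∑ a, P s a s' * (π' s a - π s a) := by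
    intro s' s
    simp [Pmat, Matrix.sub_apply, mul_sub, Finset.sum_sub_distrib]
  calc ∑ s' : S, |∑ s : S, (Pmat P π' - Pmat P π) s' s * d s|
      ≤ ∑ s' : S, ∑ s : S, ∑ a, P s a s' * |π' s a - π s a| * d s := by
        apply Finset.sum_le_sum
        intro s' _
        calc |∑ s : S, (Pmat P π' - Pmat P π) s' s * d s|
            ≤ ∑ s : S, |(Pmat P π' - Pmat P π) s' s * d s| :=
              Finset.abs_sum_le_sum_abs _ _
          _ ≤ ∑ s : S, ∑ a, P s a s' * |π' s a - π s a| * d s := by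
              apply Finset.sum_le_sum
              intro s _
              rw [hΔ, abs_mul, abs_of_nonneg (hd0 s)]
              refine le_trans (mul_le_mul_of_nonneg_right
                (Finset.abs_sum_le_sum_abs _ _) (hd0 s)) ?_
              rw [Finset.sum_mul]
              apply Finset.sum_le_sum
              intro a _
              rw [abs_mul, abs_of_nonneg (hP0 s a s')]
    _ = ∑ s : S, ∑ a, (∑ s' : S, P s a s') * |π' s a - π s a| * d s := by
        rw [Finset.sum_comm]
        refine Finset.sum_congr rfl fun s _ => ?_
        rw [Finset.sum_comm]
        refine Finset.sum_congr rfl fun a _ => ?_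
        rw [Finset.sum_mul, Finset.sum_mul]
    _ = ∑ s : S, d s * ∑ a, |π' s a - π s a| := by
        refine Finset.sum_congr rfl fun s _ => ?_
        rw [Finset.mul_sum]
        refine Finset.sum_congr rfl fun a _ => ?_
        rw [hP1 s a]; ring
    _ = 2 * ∑ s, d s * DTV π' π s := by
        rw [Finset.mul_sum]
        refine Finset.sum_congr rfl fun s _ => ?_
        simp only [DTV]; ring
end
end

section
/- (Lemma 2) In the finite MDP setup, for any two policies π and π', the ℓ1 divergence between their discounted future state visitation distributions is bounded by an average policy divergence: Σ_s |d^{π'}(s) − d^π(s)| ≤ (2γ/(1−γ)) Σ_s d^π(s) D_TV(π'||π)[s]. -/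
open Finset Matrix

noncomputable section

section Aux

attribute [local instance] Matrix.linftyOpNormedRing Matrix.linftyOpNormedAlgebra

variable {S : Type*} [Fintype S] [Nonempty S] [DecidableEq S]

/-- nonneg entries preserved under powers -/
lemma pow_entry_nonneg {M : Matrix S S ℝ} (hM0 : ∀ i j, 0 ≤ M i j) (n : ℕ) :
    ∀ i j, 0 ≤ (M ^ n) i j := by
  induction n with
  | zero => intro i j; by_cases h : i = j <;> simp [pow_zero, Matrix.one_apply, h]
  | succ n ih =>
    intro i j
    rw [pow_succ, Matrix.mul_apply]
    exact Finset.sum_nonneg fun k _ => mul_nonneg (ih i k) (hM0 k j)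

/-- the ℓ1 contraction for nonneg column-substochastic matrices -/
lemma mulVec_l1_le {M : Matrix S S ℝ} (hM0 : ∀ i j, 0 ≤ M i j)
    (hM1 : ∀ j, ∑ i, M i j ≤ 1) (v : S → ℝ) :
    ∑ i, |M.mulVec v i| ≤ ∑ j, |v j| := by
  calc ∑ i, |M.mulVec v i| ≤ ∑ i, ∑ j, M i j * |v j| := by
        refine Finset.sum_le_sum fun i _ => ?_
        rw [Matrix.mulVec, dotProduct]
        refine (Finset.abs_sum_le_sum_abs _ _).trans ?_
        refine Finset.sum_le_sum fun j _ => ?_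
        rw [abs_mul, abs_of_nonneg (hM0 i j)]
    _ = ∑ j, (∑ i, M i j) * |v j| := by
        rw [Finset.sum_comm]; simp [Finset.sum_mul]
    _ ≤ ∑ j, |v j| := by
        refine Finset.sum_le_sum fun j _ => ?_
        nlinarith [abs_nonneg (v j), hM1 j,
          Finset.sum_nonneg fun i (_ : i ∈ Finset.univ) => hM0 i j]

lemma norm_lt_one {γ : ℝ} (hγ0 : 0 ≤ γ) (hγ1 : γ < 1) {M : Matrix S S ℝ}
    (hM0 : ∀ i j, 0 ≤ M i j) (hM1 : ∀ j, ∑ i, M i j = 1) :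
    ‖γ • Mᵀ‖ < 1 := by
  have h : ‖γ • Mᵀ‖₊ ≤ ⟨γ, hγ0⟩ := by
    rw [Matrix.linfty_opNNNorm_def]
    refine Finset.sup_le fun i _ => ?_
    apply NNReal.coe_le_coe.mp
    push_cast
    have : ∀ j, ‖(γ • Mᵀ) i j‖ = γ * M j i := by
      intro j
      simp only [Matrix.smul_apply, Matrix.transpose_apply, smul_eq_mul, Real.norm_eq_abs]
      rw [abs_mul, abs_of_nonneg hγ0, abs_of_nonneg (hM0 j i)]
    calc ∑ j, ‖(γ • Mᵀ) i j‖₊.1 = ∑ j, γ * M j i := by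
          refine Finset.sum_congr rfl fun j _ => ?_
          simpa using this j
      _ = γ := by rw [← Finset.mul_sum, hM1 i, mul_one]
      _ ≤ γ := le_refl _
  calc ‖γ • Mᵀ‖ ≤ γ := h
    _ < 1 := hγ1

lemma isUnit_one_sub_smul {γ : ℝ} (hγ0 : 0 ≤ γ) (hγ1 : γ < 1) {M : Matrix S S ℝ}
    (hM0 : ∀ i j, 0 ≤ M i j) (hM1 : ∀ j, ∑ i, M i j = 1) :
    IsUnit (1 - γ • M) := by
  have h := isUnit_one_sub_of_norm_lt_one (norm_lt_one hγ0 hγ1 hM0 hM1)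
  rw [Matrix.isUnit_iff_isUnit_det] at h ⊢
  have : (1 - γ • M)ᵀ = 1 - γ • Mᵀ := by
    ext i j; simp [Matrix.transpose_apply, Matrix.one_apply, eq_comm]
  rw [← Matrix.det_transpose, this]
  exact h

lemma inv_entry_nonneg {γ : ℝ} (hγ0 : 0 ≤ γ) (hγ1 : γ < 1) {M : Matrix S S ℝ}
    (hM0 : ∀ i j, 0 ≤ M i j) (hM1 : ∀ j, ∑ i, M i j = 1) :
    ∀ i j, 0 ≤ (1 - γ • M)⁻¹ i j := by
  intro i j
  have hn := norm_lt_one hγ0 hγ1 hM0 hM1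
  have htr : (1 - γ • M)ᵀ = 1 - γ • Mᵀ := by
    ext a b; simp [Matrix.transpose_apply, Matrix.one_apply, eq_comm]
  have hinv : (1 - γ • M)⁻¹ i j = ((1 - γ • Mᵀ)⁻¹) j i := by
    rw [← htr, ← Matrix.transpose_nonsing_inv]; rfl
  rw [hinv, Matrix.nonsing_inv_eq_ringInverse]
  have hs : HasSum (fun n : ℕ => (γ • Mᵀ) ^ n) (Ring.inverse (1 - γ • Mᵀ)) :=
    hasSum_geom_series_inverse _ hn
  -- evaluate at the entry via a continuous linear map
  let e : Matrix S S ℝ →ₗ[ℝ] ℝ :=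
    { toFun := fun N => N j i
      map_add' := fun _ _ => rfl
      map_smul' := fun _ _ => rfl }
  have he : Continuous e := LinearMap.continuous_of_finiteDimensional e
  have hs' : HasSum (fun n : ℕ => ((γ • Mᵀ) ^ n) j i) (Ring.inverse (1 - γ • Mᵀ) j i) := by
    have := (hs.map e he)
    exact this
  have := hs'.tsum_eq
  rw [← this]
  refine tsum_nonneg fun n => ?_
  have h0 : ∀ a b, 0 ≤ (γ • Mᵀ) a b := fun a b =>
    mul_nonneg hγ0 (hM0 b a)
  exact pow_entry_nonneg h0 n j i

/-- ℓ1 bound for the resolvent -/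
lemma resolvent_l1_le {γ : ℝ} (hγ0 : 0 ≤ γ) (hγ1 : γ < 1) {M : Matrix S S ℝ}
    (hM0 : ∀ i j, 0 ≤ M i j) (hM1 : ∀ j, ∑ i, M i j = 1) (w : S → ℝ) :
    ∑ i, |((1 - γ • M)⁻¹).mulVec w i| ≤ (1 / (1 - γ)) * ∑ j, |w j| := by
  have hu := isUnit_one_sub_smul hγ0 hγ1 hM0 hM1
  set x := ((1 - γ • M)⁻¹).mulVec w with hx
  have hAx : (1 - γ • M).mulVec x = w := by
    rw [hx, Matrix.mulVec_mulVec, Matrix.mul_nonsing_inv _ ((Matrix.isUnit_iff_isUnit_det _).mp hu),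
      Matrix.one_mulVec]
  have hxw : ∀ i, x i = w i + γ * M.mulVec x i := by
    intro i
    have := congrFun hAx i
    rw [Matrix.sub_mulVec, Matrix.one_mulVec, Matrix.smul_mulVec] at this
    simp only [Pi.sub_apply, Pi.smul_apply, smul_eq_mul] at this
    linarith
  have key : ∑ i, |x i| ≤ ∑ i, |w i| + γ * ∑ i, |M.mulVec x i| := by
    calc ∑ i, |x i| ≤ ∑ i, (|w i| + γ * |M.mulVec x i|) := by
          refine Finset.sum_le_sum fun i _ => ?_
          rw [hxw i]
          refine (abs_add_le _ _).trans ?_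
          rw [abs_mul, abs_of_nonneg hγ0]
      _ = ∑ i, |w i| + γ * ∑ i, |M.mulVec x i| := by
          rw [Finset.sum_add_distrib, Finset.mul_sum]
  have hMx : ∑ i, |M.mulVec x i| ≤ ∑ i, |x i| :=
    mulVec_l1_le hM0 (fun j => le_of_eq (hM1 j)) x
  have h1γ : 0 < 1 - γ := by linarith
  have : (1 - γ) * ∑ i, |x i| ≤ ∑ i, |w i| := by nlinarith
  rw [div_mul_eq_mul_div, one_mul, le_div_iff₀ h1γ]
  linarith [this]

end Aux

theorem stmt_9 {S A : Type*} [Fintype S] [Fintype A] [Nonempty S] [Nonempty A] [DecidableEq S]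
    (γ : ℝ) (hγ0 : 0 ≤ γ) (hγ1 : γ < 1)
    (P : S → A → S → ℝ) (hP0 : ∀ s a s', 0 ≤ P s a s') (hP1 : ∀ s a, ∑ s', P s a s' = 1)
    (μ : S → ℝ) (hμ0 : ∀ s, 0 ≤ μ s) (hμ1 : ∑ s, μ s = 1)
    (π π' : S → A → ℝ)
    (hπ0 : ∀ s a, 0 ≤ π s a) (hπ1 : ∀ s, ∑ a, π s a = 1)
    (hπ'0 : ∀ s a, 0 ≤ π' s a) (hπ'1 : ∀ s, ∑ a, π' s a = 1) :
    ∑ s, |dpi γ P μ π' s - dpi γ P μ π s|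
      ≤ (2 * γ / (1 - γ)) * ∑ s, dpi γ P μ π s * DTV π' π s := by
  set M := Pmat P π with hM
  set M' := Pmat P π' with hM'
  have hM0 : ∀ i j, 0 ≤ M i j := fun i j =>
    Finset.sum_nonneg fun a _ => mul_nonneg (hP0 j a i) (hπ0 j a)
  have hM1 : ∀ j, ∑ i, M i j = 1 := by
    intro j
    rw [hM]
    simp only [Pmat, Matrix.of_apply]
    rw [Finset.sum_comm]
    calc ∑ a, ∑ i, P j a i * π j a = ∑ a, π j a := by
          refine Finset.sum_congr rfl fun a _ => ?_
          rw [← Finset.sum_mul, hP1 j a, one_mul]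
      _ = 1 := hπ1 j
  have hM'0 : ∀ i j, 0 ≤ M' i j := fun i j =>
    Finset.sum_nonneg fun a _ => mul_nonneg (hP0 j a i) (hπ'0 j a)
  have hM'1 : ∀ j, ∑ i, M' i j = 1 := by
    intro j
    rw [hM']
    simp only [Pmat, Matrix.of_apply]
    rw [Finset.sum_comm]
    calc ∑ a, ∑ i, P j a i * π' j a = ∑ a, π' j a := by
          refine Finset.sum_congr rfl fun a _ => ?_
          rw [← Finset.sum_mul, hP1 j a, one_mul]
      _ = 1 := hπ'1 j
  have hu : IsUnit (1 - γ • M) := isUnit_one_sub_smul hγ0 hγ1 hM0 hM1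
  have hu' : IsUnit (1 - γ • M') := isUnit_one_sub_smul hγ0 hγ1 hM'0 hM'1
  have hud : IsUnit (1 - γ • M).det := (Matrix.isUnit_iff_isUnit_det _).mp hu
  have hu'd : IsUnit (1 - γ • M').det := (Matrix.isUnit_iff_isUnit_det _).mp hu'
  set d : S → ℝ := dpi γ P μ π with hd
  set d' : S → ℝ := dpi γ P μ π' with hd'
  have h1γ : 0 < 1 - γ := by linarith
  -- nonnegativity of d
  have hdnn : ∀ s, 0 ≤ d s := by
    intro s
    rw [hd]
    simp only [dpi, Pi.smul_apply, smul_eq_mul]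
    refine mul_nonneg (by linarith) ?_
    rw [Matrix.mulVec, dotProduct]
    exact Finset.sum_nonneg fun j _ =>
      mul_nonneg (inv_entry_nonneg hγ0 hγ1 hM0 hM1 s j) (hμ0 j)
  -- the resolvent identity
  set w : S → ℝ := (M' - M).mulVec d with hw
  have hkey : ∀ s, d' s - d s = γ * ((1 - γ • M')⁻¹).mulVec w s := by
    have hmat : (1 - γ • M')⁻¹ - (1 - γ • M)⁻¹
        = (1 - γ • M')⁻¹ * (γ • (M' - M)) * (1 - γ • M)⁻¹ := by
      have heq : (γ • (M' - M)) = (1 - γ • M) - (1 - γ • M') := by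
        rw [smul_sub]; abel
      have h1 : (1 - γ • M')⁻¹ * (1 - γ • M) * (1 - γ • M)⁻¹ = (1 - γ • M')⁻¹ := by
        rw [Matrix.mul_assoc, Matrix.mul_nonsing_inv _ hud, Matrix.mul_one]
      have h2 : (1 - γ • M')⁻¹ * (1 - γ • M') * (1 - γ • M)⁻¹ = (1 - γ • M)⁻¹ := by
        rw [Matrix.nonsing_inv_mul _ hu'd, Matrix.one_mul]
      rw [heq, Matrix.mul_sub, Matrix.sub_mul, h1, h2]
    intro s
    have hfun : d' - d = ((1 - γ • M')⁻¹ * (γ • (M' - M)) * (1 - γ • M)⁻¹).mulVec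
        ((1 - γ) • μ) := by
      rw [← hmat, hd', hd]
      simp only [dpi]
      rw [Matrix.sub_mulVec, Matrix.mulVec_smul, Matrix.mulVec_smul]
    have hcs := congrFun hfun s
    simp only [Pi.sub_apply] at hcs
    rw [hcs]
    have : ((1 - γ • M')⁻¹ * (γ • (M' - M)) * (1 - γ • M)⁻¹).mulVec ((1 - γ) • μ)
        = γ • ((1 - γ • M')⁻¹).mulVec w := by
      rw [hw, hd]
      simp only [dpi, ← Matrix.mulVec_mulVec, Matrix.smul_mulVec,
        Matrix.mulVec_smul]
      rw [smul_comm]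
    rw [this]
    simp
  -- the ℓ1 bound on w
  have hwbound : ∑ s, |w s| ≤ 2 * ∑ s, d s * DTV π' π s := by
    have hws : ∀ t, |w t| ≤ ∑ s, (∑ a, P s a t * |π' s a - π s a|) * d s := by
      intro t
      rw [hw, Matrix.mulVec, dotProduct]
      refine (Finset.abs_sum_le_sum_abs _ _).trans ?_
      refine Finset.sum_le_sum fun s _ => ?_
      rw [abs_mul, abs_of_nonneg (hdnn s)]
      refine mul_le_mul_of_nonneg_right ?_ (hdnn s)
      simp only [Matrix.sub_apply, hM', hM, Pmat, Matrix.of_apply]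
      rw [← Finset.sum_sub_distrib]
      refine (Finset.abs_sum_le_sum_abs _ _).trans ?_
      refine le_of_eq (Finset.sum_congr rfl fun a _ => ?_)
      rw [← mul_sub, abs_mul, abs_of_nonneg (hP0 s a t)]
    calc ∑ t, |w t| ≤ ∑ t, ∑ s, (∑ a, P s a t * |π' s a - π s a|) * d s :=
          Finset.sum_le_sum fun t _ => hws t
      _ = ∑ s, (∑ a, |π' s a - π s a|) * d s := by
          rw [Finset.sum_comm]
          refine Finset.sum_congr rfl fun s _ => ?_
          rw [← Finset.sum_mul]
          congr 1
          rw [Finset.sum_comm]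
          refine Finset.sum_congr rfl fun a _ => ?_
          rw [← Finset.sum_mul, hP1 s a, one_mul]
      _ = 2 * ∑ s, d s * DTV π' π s := by
          rw [Finset.mul_sum]
          refine Finset.sum_congr rfl fun s _ => ?_
          rw [DTV]; ring
  -- assemble
  have hres := resolvent_l1_le hγ0 hγ1 hM'0 hM'1 w
  calc ∑ s, |d' s - d s| = γ * ∑ s, |((1 - γ • M')⁻¹).mulVec w s| := by
        rw [Finset.mul_sum]
        refine Finset.sum_congr rfl fun s _ => ?_
        rw [hkey s, abs_mul, abs_of_nonneg hγ0]
    _ ≤ γ * ((1 / (1 - γ)) * ∑ s, |w s|) := by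
        exact mul_le_mul_of_nonneg_left hres hγ0
    _ ≤ γ * ((1 / (1 - γ)) * (2 * ∑ s, d s * DTV π' π s)) := by
        refine mul_le_mul_of_nonneg_left ?_ hγ0
        refine mul_le_mul_of_nonneg_left hwbound ?_
        positivity
    _ = (2 * γ / (1 - γ)) * ∑ s, d s * DTV π' π s := by
        field_simp
end
end

section
/- (Lemma, policy improvement bound with state-distribution divergence) In the finite MDP setup, for any function f : S → ℝ and any two policies π and π', J(π') − J(π) ≥ (1/(1−γ)) ( L_{π,f}(π') − 2 ε_f^{π'} D_TV(d^{π'}||d^π) ), where D_TV(d^{π'}||d^π) = (1/2) Σ_s |d^{π'}(s) − d^π(s)|. Moreover, when π' = π both sides are identically zero. -/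
open Finset Matrix

noncomputable section

/-- The TD-error-like quantity `δ_f(s,a,s') = R(s,a,s') + γ f(s') - f(s)`. -/
def δf {S A : Type*} (γ : ℝ) (R : S → A → S → ℝ) (f : S → ℝ) (s : S) (a : A) (s' : S) : ℝ :=
  R s a s' + γ * f s' - f s

/-- The surrogate objective `L_{π,f}(π')`. -/
def Lsur {S A : Type*} [Fintype S] [Fintype A] [DecidableEq S]
    (γ : ℝ) (P : S → A → S → ℝ) (R : S → A → S → ℝ) (μ : S → ℝ) (f : S → ℝ)
    (π π' : S → A → ℝ) : ℝ :=
  ∑ s, dpi γ P μ π s * ∑ a, (π' s a - π s a) * ∑ s', P s a s' * δf γ R f s a s'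

/-- The maximal absolute expected shaped reward
`ε_f^{π'} = max_s |Σ_a π'(a|s) Σ_{s'} P(s'|s,a) δ_f(s,a,s')|`. -/
def epsf {S A : Type*} [Fintype S] [Fintype A] [Nonempty S]
    (γ : ℝ) (P : S → A → S → ℝ) (R : S → A → S → ℝ) (f : S → ℝ) (π' : S → A → ℝ) : ℝ :=
  Finset.univ.sup' Finset.univ_nonempty
    fun s => |∑ a, π' s a * ∑ s', P s a s' * δf γ R f s a s'|

-- aux1 : invertibility
lemma aux1 {S A : Type*} [Fintype S] [Fintype A] [DecidableEq S]
    (γ : ℝ) (hγ0 : 0 ≤ γ) (hγ1 : γ < 1)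
    (P : S → A → S → ℝ) (hP0 : ∀ s a s', 0 ≤ P s a s') (hP1 : ∀ s a, ∑ s', P s a s' = 1)
    (π : S → A → ℝ) (hπ0 : ∀ s a, 0 ≤ π s a) (hπ1 : ∀ s, ∑ a, π s a = 1) :
    IsUnit ((1 : Matrix S S ℝ) - γ • Pmat P π).det := by
  rw [isUnit_iff_ne_zero]
  intro hdet
  obtain ⟨v, hv0, hv⟩ := (Matrix.exists_mulVec_eq_zero_iff).mpr hdet
  have hfix : ∀ s', v s' = γ * ∑ s, Pmat P π s' s * v s := by
    intro s'
    have h2 : (1 : Matrix S S ℝ) *ᵥ v - (γ • Pmat P π) *ᵥ v = 0 := by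
      rw [← Matrix.sub_mulVec]; exact hv
    rw [Matrix.one_mulVec, Matrix.smul_mulVec, sub_eq_zero] at h2
    have h3 := congrFun h2 s'
    simpa [Matrix.mulVec, dotProduct] using h3
  have hPm0 : ∀ s' s, 0 ≤ Pmat P π s' s := fun s' s =>
    Finset.sum_nonneg fun a _ => mul_nonneg (hP0 s a s') (hπ0 s a)
  have hcol : ∀ s, ∑ s', Pmat P π s' s = 1 := by
    intro s
    simp only [Pmat, Matrix.of_apply]
    rw [Finset.sum_comm]
    calc ∑ a, ∑ s', P s a s' * π s a = ∑ a, (∑ s', P s a s') * π s a := by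
          simp [Finset.sum_mul]
      _ = 1 := by simp [hP1, hπ1 s]
  have hle : ∑ s, |v s| ≤ γ * ∑ s, |v s| := by
    calc ∑ s', |v s'| = ∑ s', |γ * ∑ s, Pmat P π s' s * v s| := by
          exact Finset.sum_congr rfl fun s' _ => by rw [hfix s']
      _ ≤ ∑ s', γ * ∑ s, Pmat P π s' s * |v s| := by
          apply Finset.sum_le_sum
          intro s' _
          rw [abs_mul, abs_of_nonneg hγ0]
          apply mul_le_mul_of_nonneg_left _ hγ0
          calc |∑ s, Pmat P π s' s * v s| ≤ ∑ s, |Pmat P π s' s * v s| :=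
                Finset.abs_sum_le_sum_abs _ _
            _ ≤ ∑ s, Pmat P π s' s * |v s| := by
                apply Finset.sum_le_sum; intro s _
                rw [abs_mul, abs_of_nonneg (hPm0 s' s)]
      _ = γ * ∑ s, |v s| := by
          rw [← Finset.mul_sum, Finset.sum_comm]
          congr 1
          calc ∑ s, ∑ s', Pmat P π s' s * |v s|
              = ∑ s, (∑ s', Pmat P π s' s) * |v s| := by simp [Finset.sum_mul]
            _ = ∑ s, |v s| := by simp [hcol]
  have hnn : 0 ≤ ∑ s, |v s| := Finset.sum_nonneg fun s _ => abs_nonneg _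
  have hzero : ∑ s, |v s| = 0 := by nlinarith
  apply hv0
  funext s
  have := (Finset.sum_eq_zero_iff_of_nonneg (fun s _ => abs_nonneg (v s))).mp hzero s (Finset.mem_univ s)
  simpa using this

-- aux2 : fixed point equation
lemma aux2 {S A : Type*} [Fintype S] [Fintype A] [DecidableEq S]
    (γ : ℝ) (hγ0 : 0 ≤ γ) (hγ1 : γ < 1)
    (P : S → A → S → ℝ) (hP0 : ∀ s a s', 0 ≤ P s a s') (hP1 : ∀ s a, ∑ s', P s a s' = 1)
    (μ : S → ℝ)
    (π : S → A → ℝ) (hπ0 : ∀ s a, 0 ≤ π s a) (hπ1 : ∀ s, ∑ a, π s a = 1) :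
    ∀ s', γ * ∑ s, Pmat P π s' s * dpi γ P μ π s = dpi γ P μ π s' - (1 - γ) * μ s' := by
  have hU := aux1 γ hγ0 hγ1 P hP0 hP1 π hπ0 hπ1
  have hMv : (1 - γ • Pmat P π) *ᵥ (dpi γ P μ π) = (1 - γ) • μ := by
    unfold dpi
    rw [Matrix.mulVec_smul, Matrix.mulVec_mulVec, Matrix.mul_nonsing_inv _ hU,
      Matrix.one_mulVec]
  intro s'
  have h2 : (1 : Matrix S S ℝ) *ᵥ (dpi γ P μ π) - (γ • Pmat P π) *ᵥ (dpi γ P μ π)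
      = (1 - γ) • μ := by rw [← Matrix.sub_mulVec]; exact hMv
  rw [Matrix.one_mulVec, Matrix.smul_mulVec] at h2
  have h3 := congrFun h2 s'
  simp only [Pi.sub_apply, Pi.smul_apply, smul_eq_mul] at h3
  have h4 : ((Pmat P π) *ᵥ (dpi γ P μ π)) s' = ∑ s, Pmat P π s' s * dpi γ P μ π s := by
    simp [Matrix.mulVec, dotProduct]
  rw [h4] at h3
  linarith

-- aux3 : key identity
lemma aux3 {S A : Type*} [Fintype S] [Fintype A] [DecidableEq S]
    (γ : ℝ) (hγ0 : 0 ≤ γ) (hγ1 : γ < 1)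
    (P : S → A → S → ℝ) (hP0 : ∀ s a s', 0 ≤ P s a s') (hP1 : ∀ s a, ∑ s', P s a s' = 1)
    (R : S → A → S → ℝ) (μ : S → ℝ) (f : S → ℝ)
    (π : S → A → ℝ) (hπ0 : ∀ s a, 0 ≤ π s a) (hπ1 : ∀ s, ∑ a, π s a = 1) :
    ∑ s, dpi γ P μ π s * (∑ a, π s a * ∑ s', P s a s' * δf γ R f s a s')
      = (1 - γ) * (J γ P R μ π) - (1 - γ) * ∑ s, f s * μ s := by
  have h1γ : (0:ℝ) < 1 - γ := by linarith
  set d := dpi γ P μ π with hd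
  -- expand the inner sum
  have hg : ∀ s, (∑ a, π s a * ∑ s', P s a s' * δf γ R f s a s')
      = (∑ a, π s a * ∑ s', P s a s' * R s a s')
        + γ * (∑ a, π s a * ∑ s', P s a s' * f s') - f s := by
    intro s
    have inner : ∀ a, ∑ s', P s a s' * δf γ R f s a s'
        = (∑ s', P s a s' * R s a s') + γ * (∑ s', P s a s' * f s') - f s := by
      intro a
      simp only [δf]
      rw [Finset.mul_sum]
      rw [show (∑ s', P s a s' * (R s a s' + γ * f s' - f s))
          = ∑ s', (P s a s' * R s a s' + γ * (P s a s' * f s') - P s a s' * f s) from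
        Finset.sum_congr rfl fun s' _ => by ring]
      rw [Finset.sum_sub_distrib, Finset.sum_add_distrib, ← Finset.mul_sum,
        ← Finset.sum_mul, hP1 s a]
      ring
    calc ∑ a, π s a * ∑ s', P s a s' * δf γ R f s a s'
        = ∑ a, (π s a * ∑ s', P s a s' * R s a s'
            + γ * (π s a * ∑ s', P s a s' * f s') - π s a * f s) := by
          exact Finset.sum_congr rfl fun a _ => by rw [inner a]; ring
      _ = _ := by
          rw [Finset.sum_sub_distrib, Finset.sum_add_distrib, ← Finset.mul_sum,
            ← Finset.sum_mul, hπ1 s]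
          ring
  -- middle term rearrangement
  have hmid : ∑ s, d s * (∑ a, π s a * ∑ s', P s a s' * f s')
      = ∑ s', f s' * ∑ s, Pmat P π s' s * d s := by
    calc ∑ s, d s * (∑ a, π s a * ∑ s', P s a s' * f s')
        = ∑ s, ∑ a, ∑ s', d s * (π s a * (P s a s' * f s')) := by
          refine Finset.sum_congr rfl fun s _ => ?_
          rw [Finset.mul_sum]
          refine Finset.sum_congr rfl fun a _ => ?_
          rw [Finset.mul_sum, Finset.mul_sum]
      _ = ∑ s, ∑ s', ∑ a, d s * (π s a * (P s a s' * f s')) :=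
          Finset.sum_congr rfl fun s _ => Finset.sum_comm
      _ = ∑ s', f s' * ∑ s, Pmat P π s' s * d s := by
          rw [Finset.sum_comm]
          refine Finset.sum_congr rfl fun s' _ => ?_
          rw [Finset.mul_sum]
          refine Finset.sum_congr rfl fun s _ => ?_
          simp only [Pmat, Matrix.of_apply, Finset.sum_mul, Finset.mul_sum]
          exact Finset.sum_congr rfl fun a _ => by ring
  have hJ : ∑ s, d s * (∑ a, π s a * ∑ s', P s a s' * R s a s') = (1 - γ) * J γ P R μ π := by
    simp only [_root_.J]
    rw [← mul_assoc, mul_one_div, div_self (ne_of_gt h1γ), one_mul]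
  have hmid2 : γ * ∑ s, d s * (∑ a, π s a * ∑ s', P s a s' * f s')
      = ∑ s, f s * d s - (1 - γ) * ∑ s, f s * μ s := by
    rw [hmid, Finset.mul_sum]
    calc ∑ s', γ * (f s' * ∑ s, Pmat P π s' s * d s)
        = ∑ s', f s' * (γ * ∑ s, Pmat P π s' s * d s) := by
          exact Finset.sum_congr rfl fun s' _ => by ring
      _ = ∑ s', (f s' * d s' - (1 - γ) * (f s' * μ s')) := by
          refine Finset.sum_congr rfl fun s' _ => ?_
          rw [aux2 γ hγ0 hγ1 P hP0 hP1 μ π hπ0 hπ1 s']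
          ring
      _ = ∑ s, f s * d s - (1 - γ) * ∑ s, f s * μ s := by
          rw [Finset.sum_sub_distrib, ← Finset.mul_sum]
  have hdf : ∑ s, f s * d s = ∑ s, d s * f s :=
    Finset.sum_congr rfl fun s _ => mul_comm _ _
  calc ∑ s, d s * (∑ a, π s a * ∑ s', P s a s' * δf γ R f s a s')
      = ∑ s, (d s * (∑ a, π s a * ∑ s', P s a s' * R s a s')
          + γ * (d s * (∑ a, π s a * ∑ s', P s a s' * f s')) - d s * f s) := by
        exact Finset.sum_congr rfl fun s _ => by rw [hg s]; ring
    _ = (∑ s, d s * (∑ a, π s a * ∑ s', P s a s' * R s a s'))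
          + γ * (∑ s, d s * (∑ a, π s a * ∑ s', P s a s' * f s'))
          - ∑ s, d s * f s := by
        rw [Finset.sum_sub_distrib, Finset.sum_add_distrib, ← Finset.mul_sum]
    _ = (1 - γ) * (J γ P R μ π) - (1 - γ) * ∑ s, f s * μ s := by
        rw [hJ, hmid2]; linarith

theorem stmt_10 {S A : Type*} [Fintype S] [Fintype A] [Nonempty S] [Nonempty A] [DecidableEq S]
    (γ : ℝ) (hγ0 : 0 ≤ γ) (hγ1 : γ < 1)
    (P : S → A → S → ℝ) (hP0 : ∀ s a s', 0 ≤ P s a s') (hP1 : ∀ s a, ∑ s', P s a s' = 1)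
    (R : S → A → S → ℝ)
    (μ : S → ℝ) (hμ0 : ∀ s, 0 ≤ μ s) (hμ1 : ∑ s, μ s = 1)
    (π π' : S → A → ℝ)
    (hπ0 : ∀ s a, 0 ≤ π s a) (hπ1 : ∀ s, ∑ a, π s a = 1)
    (hπ'0 : ∀ s a, 0 ≤ π' s a) (hπ'1 : ∀ s, ∑ a, π' s a = 1)
    (f : S → ℝ) :
    (J γ P R μ π' - J γ P R μ π
        ≥ (1 / (1 - γ)) * (Lsur γ P R μ f π π'
            - 2 * epsf γ P R f π'
              * ((1 / 2) * ∑ s, |dpi γ P μ π' s - dpi γ P μ π s|)))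
    ∧ (π' = π →
        J γ P R μ π' - J γ P R μ π = 0 ∧
          (1 / (1 - γ)) * (Lsur γ P R μ f π π'
            - 2 * epsf γ P R f π'
              * ((1 / 2) * ∑ s, |dpi γ P μ π' s - dpi γ P μ π s|)) = 0) := by
  have h1γ : (0:ℝ) < 1 - γ := by linarith
  set d' := dpi γ P μ π' with hd'
  set d := dpi γ P μ π with hd
  set g' : S → ℝ := fun s => ∑ a, π' s a * ∑ s', P s a s' * δf γ R f s a s' with hg'
  set g : S → ℝ := fun s => ∑ a, π s a * ∑ s', P s a s' * δf γ R f s a s' with hg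
  set ε := epsf γ P R f π' with hε
  have e1 := aux3 γ hγ0 hγ1 P hP0 hP1 R μ f π' hπ'0 hπ'1
  have e2 := aux3 γ hγ0 hγ1 P hP0 hP1 R μ f π hπ0 hπ1
  have hL : Lsur γ P R μ f π π' = ∑ s, d s * g' s - ∑ s, d s * g s := by
    simp only [Lsur, hg', hg]
    rw [← Finset.sum_sub_distrib]
    refine Finset.sum_congr rfl fun s _ => ?_
    rw [← mul_sub, ← Finset.sum_sub_distrib]
    congr 1
    exact Finset.sum_congr rfl fun a _ => by rw [sub_mul]
  have hsplit : ∑ s, (d' s - d s) * g' s = ∑ s, d' s * g' s - ∑ s, d s * g' s := by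
    rw [← Finset.sum_sub_distrib]
    exact Finset.sum_congr rfl fun s _ => sub_mul _ _ _
  have hdiff : (1 - γ) * (J γ P R μ π' - J γ P R μ π)
      = Lsur γ P R μ f π π' + ∑ s, (d' s - d s) * g' s := by
    have hr : (1 - γ) * (J γ P R μ π' - J γ P R μ π)
        = (1 - γ) * J γ P R μ π' - (1 - γ) * J γ P R μ π := by ring
    rw [hL, hsplit, hr]
    linarith [e1, e2]
  have hεb : ∀ s, |g' s| ≤ ε := by
    intro s
    rw [hε]
    simp only [epsf]
    exact Finset.le_sup' (fun s => |∑ a, π' s a * ∑ s', P s a s' * δf γ R f s a s'|)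
      (Finset.mem_univ s)
  have hbd : -(ε * ∑ s, |d' s - d s|) ≤ ∑ s, (d' s - d s) * g' s := by
    have h1 : ∑ s, -(ε * |d' s - d s|) ≤ ∑ s, (d' s - d s) * g' s := by
      refine Finset.sum_le_sum fun s _ => ?_
      have h2 : |(d' s - d s) * g' s| ≤ |d' s - d s| * ε := by
        rw [abs_mul]
        exact mul_le_mul_of_nonneg_left (hεb s) (abs_nonneg _)
      have h3 := neg_abs_le ((d' s - d s) * g' s)
      have h4 : |d' s - d s| * ε = ε * |d' s - d s| := mul_comm _ _
      linarith
    have h5 : ∑ s, -(ε * |d' s - d s|) = -(ε * ∑ s, |d' s - d s|) := by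
      rw [Finset.mul_sum, Finset.sum_neg_distrib]
    linarith
  have hJeq : J γ P R μ π' - J γ P R μ π
      = (1 / (1 - γ)) * (Lsur γ P R μ f π π' + ∑ s, (d' s - d s) * g' s) := by
    rw [← hdiff, ← mul_assoc, one_div, inv_mul_cancel₀ (ne_of_gt h1γ), one_mul]
  constructor
  · rw [ge_iff_le, hJeq]
    apply mul_le_mul_of_nonneg_left _ (by positivity)
    have h2 : 2 * ε * ((1/2) * ∑ s, |d' s - d s|) = ε * ∑ s, |d' s - d s| := by ring
    linarith
  · intro h
    subst h
    refine ⟨sub_self _, ?_⟩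
    have hz : Lsur γ P R μ f π' π' = 0 := by
      simp only [Lsur, sub_self, zero_mul, Finset.sum_const_zero, mul_zero]
    have hT : ∑ s, |dpi γ P μ π' s - dpi γ P μ π' s| = 0 := by
      simp only [sub_self, abs_zero, Finset.sum_const_zero]
    rw [hz, hT]
    ring
end
end

section
/- (Theorem 1, main policy improvement bound) In the finite MDP setup, for any function f : S → ℝ and any two policies π and π', J(π') − J(π) ≥ (1/(1−γ)) ( L_{π,f}(π') − (2γ ε_f^{π'}/(1−γ)) Σ_s d^π(s) D_TV(π'||π)[s] ). Moreover, when π' = π both sides are identically zero. -/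
open Finset Matrix

noncomputable section

section Helpers

set_option linter.unusedSectionVars false
set_option linter.unusedVariables false

variable {S A : Type*} [Fintype S] [Fintype A] [DecidableEq S]

lemma Pmat_nonneg (P : S → A → S → ℝ) (hP0 : ∀ s a s', 0 ≤ P s a s') (π : S → A → ℝ)
    (hπ0 : ∀ s a, 0 ≤ π s a) (s' s : S) : 0 ≤ Pmat P π s' s :=
  Finset.sum_nonneg fun a _ => mul_nonneg (hP0 _ _ _) (hπ0 _ _)

lemma Pmat_colsum (P : S → A → S → ℝ) (hP1 : ∀ s a, ∑ s', P s a s' = 1) (π : S → A → ℝ)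
    (hπ1 : ∀ s, ∑ a, π s a = 1) (s : S) : ∑ s', Pmat P π s' s = 1 := by
  simp only [Pmat, Matrix.of_apply]
  rw [Finset.sum_comm]
  simp only [← Finset.sum_mul, hP1]
  simpa using hπ1 s

/-- ℓ¹ contraction for column-stochastic nonneg matrices. -/
lemma l1_mulVec_le (Q : Matrix S S ℝ) (hQ0 : ∀ s' s, 0 ≤ Q s' s)
    (hQ1 : ∀ s, ∑ s', Q s' s = 1) (v : S → ℝ) :
    ∑ s', |Q.mulVec v s'| ≤ ∑ s, |v s| := by
  have : ∀ s', |Q.mulVec v s'| ≤ ∑ s, Q s' s * |v s| := by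
    intro s'
    refine (Finset.abs_sum_le_sum_abs _ _).trans (Finset.sum_le_sum fun s _ => ?_)
    rw [abs_mul, abs_of_nonneg (hQ0 _ _)]
  refine (Finset.sum_le_sum fun s' _ => this s').trans ?_
  rw [Finset.sum_comm]
  refine le_of_eq ?_
  simp only [← Finset.sum_mul, hQ1, one_mul]

lemma isUnit_oneSub (γ : ℝ) (hγ0 : 0 ≤ γ) (hγ1 : γ < 1) (Q : Matrix S S ℝ)
    (hQ0 : ∀ s' s, 0 ≤ Q s' s) (hQ1 : ∀ s, ∑ s', Q s' s = 1) :
    IsUnit (1 - γ • Q).det := by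
  rw [isUnit_iff_ne_zero]
  intro hdet
  obtain ⟨v, hv, hv0⟩ := Matrix.exists_mulVec_eq_zero_iff.2 hdet
  have hveq : v = γ • Q.mulVec v := by
    have := hv0
    rw [Matrix.sub_mulVec, Matrix.one_mulVec, Matrix.smul_mulVec, sub_eq_zero] at this
    exact this
  have h1 : ∑ s, |v s| ≤ γ * ∑ s, |v s| := by
    calc ∑ s, |v s| = ∑ s, γ * |Q.mulVec v s| := by
          refine Finset.sum_congr rfl fun s _ => ?_
          conv_lhs => rw [hveq]
          simp [abs_mul, abs_of_nonneg hγ0]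
      _ = γ * ∑ s, |Q.mulVec v s| := by rw [Finset.mul_sum]
      _ ≤ γ * ∑ s, |v s| := mul_le_mul_of_nonneg_left (l1_mulVec_le Q hQ0 hQ1 v) hγ0
  have hpos : 0 < ∑ s, |v s| := by
    obtain ⟨s, hs⟩ := Function.ne_iff.1 hv
    exact lt_of_lt_of_le (abs_pos.2 hs)
      (Finset.single_le_sum (f := fun t => |v t|) (fun t _ => abs_nonneg _) (Finset.mem_univ s))
  nlinarith

lemma dpi_fixed (γ : ℝ) (hγ0 : 0 ≤ γ) (hγ1 : γ < 1)
    (P : S → A → S → ℝ) (hP0 : ∀ s a s', 0 ≤ P s a s') (hP1 : ∀ s a, ∑ s', P s a s' = 1)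
    (μ : S → ℝ) (π : S → A → ℝ) (hπ0 : ∀ s a, 0 ≤ π s a) (hπ1 : ∀ s, ∑ a, π s a = 1)
    (s' : S) :
    dpi γ P μ π s' = (1 - γ) * μ s' + γ * ∑ s, Pmat P π s' s * dpi γ P μ π s := by
  have hM : IsUnit (1 - γ • Pmat P π).det :=
    isUnit_oneSub γ hγ0 hγ1 _ (Pmat_nonneg P hP0 π hπ0) (Pmat_colsum P hP1 π hπ1)
  have h1 : (1 - γ • Pmat P π).mulVec (dpi γ P μ π) = (1 - γ) • μ := by
    unfold dpi
    rw [Matrix.mulVec_smul, Matrix.mulVec_mulVec, Matrix.mul_nonsing_inv _ hM, Matrix.one_mulVec]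
  have h2 := congrFun h1 s'
  rw [Matrix.sub_mulVec, Matrix.one_mulVec, Matrix.smul_mulVec] at h2
  simp only [Pi.sub_apply, Pi.smul_apply, smul_eq_mul, Matrix.mulVec, dotProduct] at h2
  linarith [h2]

lemma dpi_nonneg (γ : ℝ) (hγ0 : 0 ≤ γ) (hγ1 : γ < 1)
    (P : S → A → S → ℝ) (hP0 : ∀ s a s', 0 ≤ P s a s') (hP1 : ∀ s a, ∑ s', P s a s' = 1)
    (μ : S → ℝ) (hμ0 : ∀ s, 0 ≤ μ s)
    (π : S → A → ℝ) (hπ0 : ∀ s a, 0 ≤ π s a) (hπ1 : ∀ s, ∑ a, π s a = 1)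
    (s : S) : 0 ≤ dpi γ P μ π s := by
  set d := dpi γ P μ π with hd
  set Q := Pmat P π with hQ
  have hQ0 := Pmat_nonneg P hP0 π hπ0
  have hQ1 := Pmat_colsum P hP1 π hπ1
  set g : S → ℝ := fun s => max (-(d s)) 0 with hg
  have hg0 : ∀ s, 0 ≤ g s := fun s => le_max_right _ _
  have hgd : ∀ s, -(d s) ≤ g s := fun s => le_max_left _ _
  have key : ∀ s', g s' ≤ γ * ∑ t, Q s' t * g t := by
    intro s'
    have hsum : 0 ≤ γ * ∑ t, Q s' t * g t :=
      mul_nonneg hγ0 (Finset.sum_nonneg fun t _ => mul_nonneg (hQ0 _ _) (hg0 t))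
    refine max_le ?_ hsum
    have hfix := dpi_fixed γ hγ0 hγ1 P hP0 hP1 μ π hπ0 hπ1 s'
    rw [← hd, ← hQ] at hfix
    have h2 : γ * ∑ t, Q s' t * (-(d t)) ≤ γ * ∑ t, Q s' t * g t :=
      mul_le_mul_of_nonneg_left (Finset.sum_le_sum fun t _ =>
        mul_le_mul_of_nonneg_left (hgd t) (hQ0 _ _)) hγ0
    have h3 : γ * ∑ t, Q s' t * (-(d t)) = -(γ * ∑ t, Q s' t * d t) := by
      simp [Finset.mul_sum, mul_neg, Finset.sum_neg_distrib]
    have hμ' : 0 ≤ (1 - γ) * μ s' := mul_nonneg (by linarith) (hμ0 s')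
    calc -(d s') = -((1 - γ) * μ s') + -(γ * ∑ t, Q s' t * d t) := by rw [hfix]; ring
      _ ≤ -(γ * ∑ t, Q s' t * d t) := by linarith
      _ ≤ γ * ∑ t, Q s' t * g t := by rw [← h3]; exact h2
  have hsum : ∑ s', g s' ≤ γ * ∑ t, g t := by
    calc ∑ s', g s' ≤ ∑ s', γ * ∑ t, Q s' t * g t := Finset.sum_le_sum fun s' _ => key s'
      _ = γ * ∑ s', ∑ t, Q s' t * g t := by rw [Finset.mul_sum]
      _ = γ * ∑ t, (∑ s', Q s' t) * g t := by rw [Finset.sum_comm]; simp [Finset.sum_mul]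
      _ = γ * ∑ t, g t := by simp [hQ, hQ1]
  have hgnn : 0 ≤ ∑ t, g t := Finset.sum_nonneg fun t _ => hg0 t
  have hzero : ∑ t, g t = 0 := by nlinarith
  have hgs : g s = 0 :=
    (Finset.sum_eq_zero_iff_of_nonneg (fun t _ => hg0 t)).1 hzero s (Finset.mem_univ s)
  have : -(d s) ≤ 0 := by rw [← hgs]; exact hgd s
  linarith

lemma J_eq (γ : ℝ) (hγ0 : 0 ≤ γ) (hγ1 : γ < 1)
    (P : S → A → S → ℝ) (hP0 : ∀ s a s', 0 ≤ P s a s') (hP1 : ∀ s a, ∑ s', P s a s' = 1)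
    (R : S → A → S → ℝ) (μ : S → ℝ)
    (π : S → A → ℝ) (hπ0 : ∀ s a, 0 ≤ π s a) (hπ1 : ∀ s, ∑ a, π s a = 1) (f : S → ℝ) :
    J γ P R μ π = (∑ s, μ s * f s)
      + (1 / (1 - γ)) * ∑ s, dpi γ P μ π s * ∑ a, π s a * ∑ s', P s a s' * δf γ R f s a s' := by
  have h1γ : (0:ℝ) < 1 - γ := by linarith
  set d := dpi γ P μ π with hd
  have inner : ∀ s, ∑ a, π s a * ∑ s', P s a s' * δf γ R f s a s'
      = (∑ a, π s a * ∑ s', P s a s' * R s a s')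
        + γ * (∑ a, π s a * ∑ s', P s a s' * f s') - f s := by
    intro s
    have ha : ∀ a, ∑ s', P s a s' * δf γ R f s a s'
        = (∑ s', P s a s' * R s a s') + γ * (∑ s', P s a s' * f s') - f s := by
      intro a
      have : ∑ s', P s a s' * δf γ R f s a s'
          = ∑ s', (P s a s' * R s a s' + γ * (P s a s' * f s') - P s a s' * f s) := by
        refine Finset.sum_congr rfl fun s' _ => ?_
        simp only [δf]; ring
      rw [this, Finset.sum_sub_distrib, Finset.sum_add_distrib, ← Finset.mul_sum,
        ← Finset.sum_mul, hP1]
      ring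
    calc ∑ a, π s a * ∑ s', P s a s' * δf γ R f s a s'
        = ∑ a, (π s a * ∑ s', P s a s' * R s a s'
            + γ * (π s a * ∑ s', P s a s' * f s') - π s a * f s) := by
          refine Finset.sum_congr rfl fun a _ => ?_
          rw [ha a]; ring
      _ = _ := by
          rw [Finset.sum_sub_distrib, Finset.sum_add_distrib, ← Finset.mul_sum,
            ← Finset.sum_mul, hπ1]
          ring
  have rearr : ∑ s, d s * ∑ a, π s a * ∑ s', P s a s' * f s'
      = ∑ s', (∑ s, Pmat P π s' s * d s) * f s' := by
    have L : ∑ s, d s * ∑ a, π s a * ∑ s', P s a s' * f s'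
        = ∑ s, ∑ a, ∑ s', P s a s' * π s a * d s * f s' := by
      refine Finset.sum_congr rfl fun s _ => ?_
      rw [Finset.mul_sum]
      refine Finset.sum_congr rfl fun a _ => ?_
      rw [Finset.mul_sum, Finset.mul_sum]
      exact Finset.sum_congr rfl fun s' _ => by ring
    have Rr : ∑ s', (∑ s, Pmat P π s' s * d s) * f s'
        = ∑ s', ∑ s, ∑ a, P s a s' * π s a * d s * f s' := by
      refine Finset.sum_congr rfl fun s' _ => ?_
      rw [Finset.sum_mul]
      refine Finset.sum_congr rfl fun s _ => ?_
      simp only [Pmat, Matrix.of_apply]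
      rw [Finset.sum_mul, Finset.sum_mul]
    rw [L, Rr]
    calc ∑ s, ∑ a, ∑ s', P s a s' * π s a * d s * f s'
        = ∑ s, ∑ s', ∑ a, P s a s' * π s a * d s * f s' :=
          Finset.sum_congr rfl fun s _ => Finset.sum_comm
      _ = ∑ s', ∑ s, ∑ a, P s a s' * π s a * d s * f s' := Finset.sum_comm
  have key : γ * ∑ s', (∑ s, Pmat P π s' s * d s) * f s'
      = (∑ s', d s' * f s') - (1 - γ) * ∑ s', μ s' * f s' := by
    rw [Finset.mul_sum]
    have : ∀ s', γ * ((∑ s, Pmat P π s' s * d s) * f s')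
        = d s' * f s' - (1 - γ) * (μ s' * f s') := by
      intro s'
      have hfix := dpi_fixed γ hγ0 hγ1 P hP0 hP1 μ π hπ0 hπ1 s'
      rw [← hd] at hfix
      rw [hfix]; ring
    rw [Finset.sum_congr rfl fun s' _ => this s', Finset.sum_sub_distrib, ← Finset.mul_sum]
  have expand : ∑ s, d s * ∑ a, π s a * ∑ s', P s a s' * δf γ R f s a s'
      = (∑ s, d s * ∑ a, π s a * ∑ s', P s a s' * R s a s')
        + γ * (∑ s, d s * ∑ a, π s a * ∑ s', P s a s' * f s') - ∑ s, d s * f s := by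
    calc ∑ s, d s * ∑ a, π s a * ∑ s', P s a s' * δf γ R f s a s'
        = ∑ s, (d s * ∑ a, π s a * ∑ s', P s a s' * R s a s'
            + γ * (d s * ∑ a, π s a * ∑ s', P s a s' * f s') - d s * f s) := by
          refine Finset.sum_congr rfl fun s _ => ?_
          rw [inner s]; ring
      _ = _ := by
          rw [Finset.sum_sub_distrib, Finset.sum_add_distrib, ← Finset.mul_sum]
  have main : ∑ s, d s * ∑ a, π s a * ∑ s', P s a s' * δf γ R f s a s'
      = (∑ s, d s * ∑ a, π s a * ∑ s', P s a s' * R s a s')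
        - (1 - γ) * ∑ s, μ s * f s := by
    rw [expand, rearr, key]; ring
  rw [main]
  show (1 / (1 - γ)) * ∑ s, d s * ∑ a, π s a * ∑ s', P s a s' * R s a s' = _
  field_simp
  ring

end Helpers

theorem stmt_11 {S A : Type*} [Fintype S] [Fintype A] [Nonempty S] [Nonempty A] [DecidableEq S]
    (γ : ℝ) (hγ0 : 0 ≤ γ) (hγ1 : γ < 1)
    (P : S → A → S → ℝ) (hP0 : ∀ s a s', 0 ≤ P s a s') (hP1 : ∀ s a, ∑ s', P s a s' = 1)
    (R : S → A → S → ℝ)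
    (μ : S → ℝ) (hμ0 : ∀ s, 0 ≤ μ s) (hμ1 : ∑ s, μ s = 1)
    (π π' : S → A → ℝ)
    (hπ0 : ∀ s a, 0 ≤ π s a) (hπ1 : ∀ s, ∑ a, π s a = 1)
    (hπ'0 : ∀ s a, 0 ≤ π' s a) (hπ'1 : ∀ s, ∑ a, π' s a = 1)
    (f : S → ℝ) :
    (J γ P R μ π' - J γ P R μ π
        ≥ (1 / (1 - γ)) * (Lsur γ P R μ f π π'
            - (2 * γ * epsf γ P R f π' / (1 - γ)) * ∑ s, dpi γ P μ π s * DTV π' π s))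
    ∧ (π' = π →
        J γ P R μ π' - J γ P R μ π = 0 ∧
          (1 / (1 - γ)) * (Lsur γ P R μ f π π'
            - (2 * γ * epsf γ P R f π' / (1 - γ)) * ∑ s, dpi γ P μ π s * DTV π' π s) = 0) := by
  have h1γ : (0:ℝ) < 1 - γ := by linarith
  constructor
  · -- main inequality
    set d := dpi γ P μ π with hd
    set d' := dpi γ P μ π' with hd'
    set g' : S → ℝ := fun s => ∑ a, π' s a * ∑ s', P s a s' * δf γ R f s a s' with hg'
    set gp : S → ℝ := fun s => ∑ a, π s a * ∑ s', P s a s' * δf γ R f s a s' with hgp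
    set ε := epsf γ P R f π' with hεd
    have dnn : ∀ s, 0 ≤ d s := fun s => dpi_nonneg γ hγ0 hγ1 P hP0 hP1 μ hμ0 π hπ0 hπ1 s
    have hεb : ∀ s, |g' s| ≤ ε := by
      intro s
      rw [hεd]
      exact Finset.le_sup'
        (fun s => |∑ a, π' s a * ∑ s', P s a s' * δf γ R f s a s'|) (Finset.mem_univ s)
    have hε0 : 0 ≤ ε := le_trans (abs_nonneg _) (hεb (Classical.arbitrary S))
    -- J difference
    have hJ' := J_eq γ hγ0 hγ1 P hP0 hP1 R μ π' hπ'0 hπ'1 f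
    have hJ := J_eq γ hγ0 hγ1 P hP0 hP1 R μ π hπ0 hπ1 f
    have hdiff : J γ P R μ π' - J γ P R μ π
        = (1 / (1 - γ)) * ((∑ s, d' s * g' s) - ∑ s, d s * gp s) := by
      rw [hJ', hJ]; ring
    -- surrogate
    have hLs : Lsur γ P R μ f π π' = ∑ s, d s * (g' s - gp s) := by
      unfold Lsur
      refine Finset.sum_congr rfl fun s _ => ?_
      rw [← hd]
      congr 1
      simp only [hg', hgp, sub_mul]
      rw [Finset.sum_sub_distrib]
    have hsplit : (∑ s, d' s * g' s) - ∑ s, d s * gp s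
        = Lsur γ P R μ f π π' + ∑ s, (d' s - d s) * g' s := by
      rw [hLs, ← Finset.sum_add_distrib, ← Finset.sum_sub_distrib]
      exact Finset.sum_congr rfl fun s _ => by ring
    -- ℓ¹ bound on d' - d
    have hfix := fun s' => dpi_fixed γ hγ0 hγ1 P hP0 hP1 μ π hπ0 hπ1 s'
    have hfix' := fun s' => dpi_fixed γ hγ0 hγ1 P hP0 hP1 μ π' hπ'0 hπ'1 s'
    have hw : ∀ s', d' s' - d s' = γ * ∑ t, Pmat P π' s' t * (d' t - d t)
        + γ * ∑ t, (Pmat P π' s' t - Pmat P π s' t) * d t := by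
      intro s'
      have e1 : ∑ t, Pmat P π' s' t * (d' t - d t)
          = (∑ t, Pmat P π' s' t * d' t) - ∑ t, Pmat P π' s' t * d t := by
        simp only [mul_sub]; rw [Finset.sum_sub_distrib]
      have e2 : ∑ t, (Pmat P π' s' t - Pmat P π s' t) * d t
          = (∑ t, Pmat P π' s' t * d t) - ∑ t, Pmat P π s' t * d t := by
        simp only [sub_mul]; rw [Finset.sum_sub_distrib]
      have hf := hfix s'
      have hf' := hfix' s'
      rw [← hd] at hf
      rw [← hd'] at hf'
      rw [e1, e2, hf, hf']
      ring
    have hQ'0 := Pmat_nonneg P hP0 π' hπ'0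
    have hQ'1 := Pmat_colsum P hP1 π' hπ'1
    have hl1 : (1 - γ) * ∑ s, |d' s - d s| ≤ 2 * γ * ∑ s, d s * DTV π' π s := by
      have step1 : ∑ s', |d' s' - d s'|
          ≤ γ * (∑ s, |d' s - d s|)
            + γ * ∑ s', |∑ t, (Pmat P π' s' t - Pmat P π s' t) * d t| := by
        have h1 : ∀ s', |d' s' - d s'| ≤ γ * |∑ t, Pmat P π' s' t * (d' t - d t)|
            + γ * |∑ t, (Pmat P π' s' t - Pmat P π s' t) * d t| := by
          intro s'
          rw [hw s']
          refine (abs_add_le _ _).trans ?_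
          simp only [abs_mul, abs_of_nonneg hγ0, le_refl]
        refine (Finset.sum_le_sum fun s' _ => h1 s').trans ?_
        rw [Finset.sum_add_distrib, ← Finset.mul_sum, ← Finset.mul_sum]
        refine add_le_add_left (mul_le_mul_of_nonneg_left ?_ hγ0) _
        exact l1_mulVec_le (Pmat P π') hQ'0 hQ'1 (fun t => d' t - d t)
      have step2 : ∑ s', |∑ t, (Pmat P π' s' t - Pmat P π s' t) * d t|
          ≤ 2 * ∑ s, d s * DTV π' π s := by
        have per : ∀ s', |∑ t, (Pmat P π' s' t - Pmat P π s' t) * d t|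
            ≤ ∑ t, (∑ a, P t a s' * |π' t a - π t a|) * d t := by
          intro s'
          refine (Finset.abs_sum_le_sum_abs _ _).trans (Finset.sum_le_sum fun t _ => ?_)
          rw [abs_mul, abs_of_nonneg (dnn t)]
          refine mul_le_mul_of_nonneg_right ?_ (dnn t)
          have hΔ : Pmat P π' s' t - Pmat P π s' t
              = ∑ a, P t a s' * (π' t a - π t a) := by
            simp only [Pmat, Matrix.of_apply, mul_sub]
            rw [Finset.sum_sub_distrib]
          rw [hΔ]
          refine (Finset.abs_sum_le_sum_abs _ _).trans (le_of_eq ?_)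
          refine Finset.sum_congr rfl fun a _ => ?_
          rw [abs_mul, abs_of_nonneg (hP0 _ _ _)]
        refine (Finset.sum_le_sum fun s' _ => per s').trans (le_of_eq ?_)
        rw [Finset.sum_comm]
        rw [Finset.mul_sum]
        refine Finset.sum_congr rfl fun t _ => ?_
        rw [← Finset.sum_mul]
        have : ∑ s', ∑ a, P t a s' * |π' t a - π t a|
            = ∑ a, |π' t a - π t a| := by
          rw [Finset.sum_comm]
          refine Finset.sum_congr rfl fun a _ => ?_
          rw [← Finset.sum_mul, hP1, one_mul]
        rw [this, DTV]
        ring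
      nlinarith [step1, step2]
    -- putting it together
    have hT : -(∑ s, (d' s - d s) * g' s) ≤ ε * ∑ s, |d' s - d s| := by
      have h1 : |∑ s, (d' s - d s) * g' s| ≤ ε * ∑ s, |d' s - d s| := by
        refine (Finset.abs_sum_le_sum_abs _ _).trans ?_
        rw [Finset.mul_sum]
        refine Finset.sum_le_sum fun s _ => ?_
        rw [abs_mul, mul_comm]
        exact mul_le_mul_of_nonneg_right (hεb s) (abs_nonneg _)
      linarith [neg_abs_le (∑ s, (d' s - d s) * g' s)]
    have hfin : ε * ∑ s, |d' s - d s|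
        ≤ 2 * γ * ε / (1 - γ) * ∑ s, d s * DTV π' π s := by
      rw [div_mul_eq_mul_div, le_div_iff₀ h1γ]
      nlinarith [mul_le_mul_of_nonneg_left hl1 hε0]
    have harg : Lsur γ P R μ f π π' - 2 * γ * ε / (1 - γ) * ∑ s, d s * DTV π' π s
        ≤ Lsur γ P R μ f π π' + ∑ s, (d' s - d s) * g' s := by
      linarith
    rw [ge_iff_le, hdiff, hsplit]
    exact mul_le_mul_of_nonneg_left harg (by positivity)
  · -- equality case
    intro h
    subst h
    refine ⟨sub_self _, ?_⟩
    have hL : Lsur γ P R μ f π' π' = 0 := by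
      unfold Lsur
      simp
    have hD : ∀ s, DTV π' π' s = 0 := by
      intro s; unfold DTV; simp
    rw [hL]
    simp only [hD, mul_zero, Finset.sum_const_zero]
    ring
end
end

section
/- (Per-state advantage-estimator inequality) Let A be a nonempty finite set, let p, q : A → ℝ be probability distributions on A (nonnegative, summing to 1), and let g, ĝ : A → ℝ be functions such that Σ_a q(a) g(a) = 0. Then Σ_a p(a) g(a) ≥ Σ_a p(a) ĝ(a) − Σ_a q(a) ĝ(a) − 2 (max_a |g(a) − ĝ(a)|) D_TV(p||q), where D_TV(p||q) = (1/2) Σ_a |p(a) − q(a)|. -/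
open Finset

theorem stmt_14 {A : Type*} [Fintype A] [Nonempty A]
    (p q : A → ℝ)
    (hp0 : ∀ a, 0 ≤ p a) (hp1 : ∑ a, p a = 1)
    (hq0 : ∀ a, 0 ≤ q a) (hq1 : ∑ a, q a = 1)
    (g ghat : A → ℝ) (hg : ∑ a, q a * g a = 0) :
    ∑ a, p a * g a
      ≥ ∑ a, p a * ghat a - ∑ a, q a * ghat a
        - 2 * (Finset.univ.sup' Finset.univ_nonempty fun a => |g a - ghat a|)
          * ((1 / 2) * ∑ a, |p a - q a|) := by
  set M := Finset.univ.sup' Finset.univ_nonempty fun a => |g a - ghat a| with hM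
  have key : ∀ a : A, (p a - q a) * (g a - ghat a) ≥ -(M * |p a - q a|) := by
    intro a
    have h1 : |(p a - q a) * (g a - ghat a)| ≤ M * |p a - q a| := by
      rw [abs_mul, mul_comm]
      exact mul_le_mul_of_nonneg_right
        (Finset.le_sup' (fun a => |g a - ghat a|) (mem_univ a)) (abs_nonneg _)
    linarith [neg_abs_le ((p a - q a) * (g a - ghat a))]
  have hsum : ∑ a, (p a - q a) * (g a - ghat a) ≥ -(M * ∑ a, |p a - q a|) := by
    rw [Finset.mul_sum, ← Finset.sum_neg_distrib]
    exact Finset.sum_le_sum fun a _ => key a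
  have expand : ∑ a, (p a - q a) * (g a - ghat a)
      = ∑ a, p a * g a - ∑ a, p a * ghat a - (∑ a, q a * g a) + ∑ a, q a * ghat a := by
    simp [sub_mul, mul_sub, Finset.sum_sub_distrib]
    ring
  rw [expand, hg] at hsum
  linarith
end
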